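/- Let N be a nilpotent real n×n matrix and let k be an orthogonal n×n matrix. For each t ∈ ℝ let Q(t) be the unique orthogonal n×n matrix for which there exists an upper triangular matrix B(t) with positive diagonal entries satisfying exp(t N)·k = Q(t)·B(t) (the orthogonal factor of the QR decomposition of exp(tN)·k, given by Gram–Schmidt applied to its columns). Then Q(t) converges entrywise to some orthogonal matrix as t → +∞. -/

import Mathlib

open Filter Topology NormedSpace Matrix

lemma aux_eval_div_pow {q : Polynomial ℝ} {d : ℕ} (h : q.natDegree ≤ d) :
    Tendsto (fun t : ℝ => Polynomial.eval t q / t ^ d) atTop (𝓝 (q.coeff d)) := by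
  have h1 : ∀ᶠ t : ℝ in atTop,
      Polynomial.eval t q / t ^ d
        = ∑ k ∈ Finset.range (d + 1), q.coeff k * (t ^ k / t ^ d) := by
    filter_upwards [eventually_gt_atTop (0 : ℝ)] with t ht
    rw [Polynomial.eval_eq_sum_range' (Nat.lt_succ_of_le h), Finset.sum_div]
    exact Finset.sum_congr rfl fun k _ => by ring
  have h2 : Tendsto (fun t : ℝ => ∑ k ∈ Finset.range (d + 1), q.coeff k * (t ^ k / t ^ d))
      atTop (𝓝 (∑ k ∈ Finset.range (d + 1), q.coeff k * (if k = d then 1 else 0))) := by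
    apply tendsto_finset_sum
    intro k hk
    apply Tendsto.const_mul
    rcases eq_or_lt_of_le (Nat.lt_succ_iff.mp (Finset.mem_range.mp hk)) with he | hlt
    · rw [if_pos he]
      have heq : (fun t : ℝ => t ^ k / t ^ d) =ᶠ[atTop] fun _ => (1 : ℝ) := by
        filter_upwards [eventually_gt_atTop (0 : ℝ)] with t ht
        rw [he]; field_simp
      exact Tendsto.congr' heq.symm tendsto_const_nhds
    · rw [if_neg (Nat.ne_of_lt hlt)]
      have h0 : Tendsto (fun t : ℝ => (t ^ (d - k))⁻¹) atTop (𝓝 0) :=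
        (tendsto_pow_atTop (Nat.sub_ne_zero_of_lt hlt)).inv_tendsto_atTop
      refine h0.congr' ?_
      filter_upwards [eventually_gt_atTop (0 : ℝ)] with t ht
      field_simp
      rw [← pow_add]
      congr 1
      omega
  have h3 : (∑ k ∈ Finset.range (d + 1), q.coeff k * (if k = d then 1 else 0)) = q.coeff d := by
    simp [Finset.sum_ite_eq' (Finset.range (d + 1)) d]
  rw [h3] at h2
  exact h2.congr' (h1.mono fun t h => h.symm)

lemma aux_poly_tendsto {n : ℕ} (p : Fin n → Polynomial ℝ) (hp : ∃ y, p y ≠ 0) (x : Fin n) :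
    ∃ l : ℝ, Tendsto
      (fun t => Polynomial.eval t (p x) / Real.sqrt (∑ y, (Polynomial.eval t (p y)) ^ 2))
      atTop (𝓝 l) := by
  classical
  obtain ⟨y0, hy0⟩ := hp
  set d := Finset.univ.sup fun y => (p y).natDegree with hd
  set c : Fin n → ℝ := fun y => (p y).coeff d with hc
  have hdle : ∀ y, (p y).natDegree ≤ d := fun y => hd ▸ Finset.le_sup (f := fun y => (p y).natDegree) (Finset.mem_univ y)
  have hcne : ∃ y, c y ≠ 0 := by
    obtain ⟨y, -, hy⟩ := Finset.exists_mem_eq_sup Finset.univ ⟨y0, Finset.mem_univ _⟩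
      fun y => (p y).natDegree
    by_cases hpy : p y = 0
    · refine ⟨y0, ?_⟩
      have hd0 : d = 0 := by rw [hd, hy, hpy, Polynomial.natDegree_zero]
      intro hcon
      apply hy0
      have : p y0 = Polynomial.C ((p y0).coeff 0) :=
        Polynomial.eq_C_of_natDegree_le_zero (hd0 ▸ hdle y0)
      rw [this]
      simp only [hc, hd0] at hcon
      rw [hcon]; simp
    · refine ⟨y, ?_⟩
      show (p y).coeff d ≠ 0
      rw [hd, hy]
      exact fun hcon => hpy (Polynomial.leadingCoeff_eq_zero.mp
        (by rwa [Polynomial.leadingCoeff]))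
  have hnum : ∀ y, Tendsto (fun t => Polynomial.eval t (p y) / t ^ d) atTop (𝓝 (c y)) :=
    fun y => aux_eval_div_pow (hdle y)
  have hden : Tendsto (fun t => Real.sqrt (∑ y, (Polynomial.eval t (p y) / t ^ d) ^ 2)) atTop
      (𝓝 (Real.sqrt (∑ y, (c y) ^ 2))) :=
    Filter.Tendsto.sqrt (tendsto_finset_sum _ fun y _ => (hnum y).pow 2)
  obtain ⟨y1, hy1⟩ := hcne
  have hs : 0 < Real.sqrt (∑ y, (c y) ^ 2) :=
    Real.sqrt_pos.mpr (Finset.sum_pos' (fun y _ => sq_nonneg _)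
      ⟨y1, Finset.mem_univ _, pow_two_pos_of_ne_zero hy1⟩)
  refine ⟨c x / Real.sqrt (∑ y, (c y) ^ 2), ?_⟩
  have hT := (hnum x).div hden (ne_of_gt hs)
  refine hT.congr' ?_
  filter_upwards [eventually_gt_atTop (0 : ℝ)] with t ht
  have htd : (0 : ℝ) < t ^ d := pow_pos ht d
  have hrw : Real.sqrt (∑ y, (Polynomial.eval t (p y) / t ^ d) ^ 2)
      = Real.sqrt (∑ y, (Polynomial.eval t (p y)) ^ 2) / t ^ d := by
    have : (∑ y, (Polynomial.eval t (p y) / t ^ d) ^ 2)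
        = (∑ y, (Polynomial.eval t (p y)) ^ 2) / (t ^ d) ^ 2 := by
      rw [Finset.sum_div]
      exact Finset.sum_congr rfl fun y _ => by ring
    rw [this, Real.sqrt_div (Finset.sum_nonneg fun y _ => sq_nonneg _),
      Real.sqrt_sq htd.le]
  simp only [Pi.div_apply]
  rw [hrw]
  set S := Real.sqrt (∑ y, (Polynomial.eval t (p y)) ^ 2) with hS
  rcases eq_or_ne S 0 with h0 | h0
  · simp [h0]
  · field_simp

/-- The orthogonal (Gram–Schmidt) factor of `exp(tN)·k`, for `N` nilpotent and `k`
orthogonal, converges to an orthogonal matrix as `t → +∞`. -/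
theorem qr_factor_of_unipotent_flow_converges
    {n : ℕ} (N k : Matrix (Fin n) (Fin n) ℝ)
    (hN : ∃ m : ℕ, N ^ m = 0)
    (hk : k * k.transpose = 1)
    (Q : ℝ → Matrix (Fin n) (Fin n) ℝ)
    (hQ : ∀ t : ℝ, Q t * (Q t).transpose = 1 ∧
      ∃ B : Matrix (Fin n) (Fin n) ℝ,
        (∀ i j : Fin n, j < i → B i j = 0) ∧ (∀ i, 0 < B i i) ∧
        exp (t • N) * k = Q t * B) :
    ∃ L : Matrix (Fin n) (Fin n) ℝ, L * L.transpose = 1 ∧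
      ∀ i j : Fin n, Tendsto (fun t => Q t i j) atTop (𝓝 (L i j)) := by
  classical
  obtain ⟨m, hm⟩ := hN
  -- `exp (t • N) * k` has polynomial entries
  set P : Matrix (Fin n) (Fin n) (Polynomial ℝ) :=
    Matrix.of fun x y => ∑ i ∈ Finset.range m,
      Polynomial.C (((i.factorial : ℕ) : ℝ)⁻¹ * (N ^ i * k) x y) * Polynomial.X ^ i with hPdef
  have hexp : ∀ t : ℝ, exp (t • N) = ∑ i ∈ Finset.range m, ((i.factorial : ℕ) : ℝ)⁻¹ • (t • N) ^ i := by
    intro t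
    rw [exp_eq_tsum (𝕂 := ℝ)]
    apply tsum_eq_sum
    intro i hi
    have hmi : m ≤ i := by simpa using hi
    have hNi : N ^ i = 0 := by
      have : N ^ i = N ^ m * N ^ (i - m) := by
        rw [← pow_add, Nat.add_sub_cancel' hmi]
      rw [this, hm, zero_mul]
    rw [smul_pow, hNi]
    simp
  have hP : ∀ (t : ℝ) (x y : Fin n), Polynomial.eval t (P x y) = (exp (t • N) * k) x y := by
    intro t x y
    rw [hexp, Finset.sum_mul, Matrix.sum_apply]
    simp only [hPdef, Matrix.of_apply, Polynomial.eval_finset_sum, Polynomial.eval_mul,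
      Polynomial.eval_C, Polynomial.eval_pow, Polynomial.eval_X]
    refine Finset.sum_congr rfl fun i _ => ?_
    rw [smul_pow, smul_smul, Matrix.smul_mul, Matrix.smul_apply]
    rw [show (((i.factorial : ℕ) : ℝ)⁻¹ * t ^ i) • ((N ^ i * k) x y) = ((i.factorial : ℕ) : ℝ)⁻¹ * t ^ i * ((N ^ i * k) x y)
      from rfl]
    ring
  -- `exp (t • N) * k` is injective (as mulVec)
  have hAunit : ∀ t : ℝ, IsUnit (exp (t • N) * k) :=
    fun t => (Matrix.isUnit_exp (t • N)).mul (⟨⟨k, kᵀ, hk, mul_eq_one_comm.mp hk⟩, rfl⟩)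
  have hAinj : ∀ (t : ℝ) (v : Fin n → ℝ), (exp (t • N) * k) *ᵥ v = 0 → v = 0 := by
    intro t v hv
    obtain ⟨u, hu⟩ := hAunit t
    have h1 : (↑u⁻¹ : Matrix (Fin n) (Fin n) ℝ) * (exp (t • N) * k) = 1 := by
      rw [← hu]; exact_mod_cast u.inv_mul
    calc v = ((↑u⁻¹ : Matrix (Fin n) (Fin n) ℝ) * (exp (t • N) * k)) *ᵥ v := by
            rw [h1, Matrix.one_mulVec]
      _ = (↑u⁻¹ : Matrix (Fin n) (Fin n) ℝ) *ᵥ ((exp (t • N) * k) *ᵥ v) := by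
            rw [Matrix.mulVec_mulVec]
      _ = 0 := by rw [hv, Matrix.mulVec_zero]
  -- orthonormality of columns of Q t
  have hQcol : ∀ (t : ℝ) (i j : Fin n),
      (∑ x, Q t x i * Q t x j) = if i = j then (1 : ℝ) else 0 := by
    intro t i j
    have h1 : (Q t)ᵀ * Q t = 1 := mul_eq_one_comm.mp (hQ t).1
    have h2 := congrFun (congrFun h1 i) j
    simpa [Matrix.mul_apply, Matrix.transpose_apply, Matrix.one_apply] using h2
  -- the key per-column statement
  have key : ∀ c : Fin n, ∃ p : Fin n → Polynomial ℝ, (∃ y, p y ≠ 0) ∧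
      ∀ t x, Q t x c = Polynomial.eval t (p x) /
        Real.sqrt (∑ y, (Polynomial.eval t (p y)) ^ 2) := by
    intro c
    have hcle : (c : ℕ) ≤ n := c.2.le
    set ι : Fin (c : ℕ) → Fin n := Fin.castLE hcle with hιdef
    have hιlt : ∀ i : Fin (c : ℕ), ι i < c := fun i => by
      simpa [hιdef, Fin.lt_def] using i.2
    set GP : Matrix (Fin (c : ℕ)) (Fin (c : ℕ)) (Polynomial ℝ) :=
      Matrix.of fun i j => ∑ x, P x (ι i) * P x (ι j) with hGPdef
    set bP : Fin (c : ℕ) → Polynomial ℝ := fun i => ∑ x, P x (ι i) * P x c with hbPdef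
    set yP : Fin (c : ℕ) → Polynomial ℝ := GP.adjugate *ᵥ bP with hyPdef
    set gP : Fin n → Polynomial ℝ :=
      fun x => GP.det * P x c - ∑ l, yP l * P x (ι l) with hgPdef
    -- main per-t fact
    have hmain : ∀ t : ℝ, ∃ s : ℝ, 0 < s ∧
        ∀ x, Polynomial.eval t (gP x) = s * Q t x c := by
      intro t
      obtain ⟨hQQ, B, hBtri, hBpos, hAQB⟩ := hQ t
      set A : Matrix (Fin n) (Fin n) ℝ := exp (t • N) * k with hAdef
      set M : Matrix (Fin (c : ℕ)) (Fin (c : ℕ)) ℝ :=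
        Matrix.of fun i j => ∑ x, A x (ι i) * A x (ι j) with hMdef
      set bv : Fin (c : ℕ) → ℝ := fun i => ∑ x, A x (ι i) * A x c with hbvdef
      set D : ℝ := M.det with hDdef
      set yv : Fin (c : ℕ) → ℝ := M.adjugate *ᵥ bv with hyvdef
      set g : Fin n → ℝ := fun x => D * A x c - ∑ l, yv l * A x (ι l) with hgdef
      have hA : ∀ x y, Polynomial.eval t (P x y) = A x y := fun x y => by
        rw [hAdef]; exact hP t x y
      -- bridge polynomial ↔ real
      have hMe : (Polynomial.evalRingHom t).mapMatrix GP = M := by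
        ext i j
        simp [hGPdef, RingHom.mapMatrix_apply, Matrix.map_apply, Polynomial.eval_finset_sum,
          Polynomial.eval_mul, hA, hMdef]
      have hDe : Polynomial.eval t GP.det = D := by
        have h := (Polynomial.evalRingHom t).map_det GP
        rw [hMe] at h
        exact h
      have hbe : ∀ i, Polynomial.eval t (bP i) = bv i := by
        intro i
        simp [hbPdef, Polynomial.eval_finset_sum, Polynomial.eval_mul, hA, hbvdef]
      have hye : ∀ l, Polynomial.eval t (yP l) = yv l := by
        intro l
        have hadj : ∀ i j, Polynomial.eval t (GP.adjugate i j) = M.adjugate i j := by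
          intro i j
          have h := (Polynomial.evalRingHom t).map_adjugate GP
          rw [hMe] at h
          exact congrFun (congrFun h i) j
        simp [hyPdef, hyvdef, Matrix.mulVec, dotProduct, Polynomial.eval_finset_sum,
          Polynomial.eval_mul, hadj, hbe]
      have hge : ∀ x, Polynomial.eval t (gP x) = g x := by
        intro x
        simp [hgPdef, hgdef, Polynomial.eval_finset_sum, Polynomial.eval_mul, hDe, hye, hA]
      -- positivity of the Gram determinant
      have hDpos : 0 < D := by
        have hpd : M.PosDef := by
          rw [Matrix.posDef_iff_dotProduct_mulVec]
          constructor
          · ext i j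
            simp [Matrix.conjTranspose_apply, hMdef, mul_comm]
          · intro x hx
            have h1 : dotProduct (star x) (M *ᵥ x)
                = ∑ i, ∑ l, ∑ xx, x i * A xx (ι i) * A xx (ι l) * x l := by
              simp only [dotProduct, Matrix.mulVec, Pi.star_apply, star_trivial, hMdef,
                Matrix.of_apply, Finset.mul_sum, Finset.sum_mul]
              refine Finset.sum_congr rfl fun i _ => Finset.sum_congr rfl fun l _ =>
                Finset.sum_congr rfl fun xx _ => by ring
            have h2 : (∑ xx, (∑ l, A xx (ι l) * x l) * (∑ l, A xx (ι l) * x l))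
                = ∑ i, ∑ l, ∑ xx, x i * A xx (ι i) * A xx (ι l) * x l := by
              calc (∑ xx, (∑ l, A xx (ι l) * x l) * (∑ l, A xx (ι l) * x l))
                  = ∑ xx, ∑ i, ∑ l, (A xx (ι i) * x i) * (A xx (ι l) * x l) := by
                    refine Finset.sum_congr rfl fun xx _ => ?_
                    rw [Finset.sum_mul_sum]
                _ = ∑ i, ∑ xx, ∑ l, (A xx (ι i) * x i) * (A xx (ι l) * x l) :=
                    Finset.sum_comm
                _ = ∑ i, ∑ l, ∑ xx, (A xx (ι i) * x i) * (A xx (ι l) * x l) :=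
                    Finset.sum_congr rfl fun i _ => Finset.sum_comm
                _ = ∑ i, ∑ l, ∑ xx, x i * A xx (ι i) * A xx (ι l) * x l :=
                    Finset.sum_congr rfl fun i _ => Finset.sum_congr rfl fun l _ =>
                      Finset.sum_congr rfl fun xx _ => by ring
            rw [h1, ← h2]
            have hne : ∃ xx, (∑ l, A xx (ι l) * x l) ≠ 0 := by
              by_contra hcon
              push_neg at hcon
              set v : Fin n → ℝ := fun j =>
                if h : (j : ℕ) < (c : ℕ) then x ⟨(j : ℕ), h⟩ else 0 with hvdef
              have hv : A *ᵥ v = 0 := by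
                funext xx
                have himg : ∑ j, A xx j * v j = ∑ l, A xx (ι l) * v (ι l) := by
                  have hinj : ∀ a ∈ (Finset.univ : Finset (Fin (c : ℕ))), ∀ b ∈ Finset.univ,
                      ι a = ι b → a = b := fun a _ b _ h => Fin.castLE_injective hcle h
                  have himg2 : (∑ j ∈ Finset.univ.image ι, A xx j * v j)
                      = ∑ l, A xx (ι l) * v (ι l) := Finset.sum_image hinj
                  rw [← himg2]
                  refine (Finset.sum_subset (Finset.subset_univ _) ?_).symm
                  intro j _ hj
                  have hjc : ¬((j : ℕ) < (c : ℕ)) := by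
                    intro hlt
                    exact hj (Finset.mem_image.mpr ⟨⟨(j : ℕ), hlt⟩, Finset.mem_univ _,
                      by simp [hιdef, Fin.ext_iff]⟩)
                  have hvj : v j = 0 := by
                    simp only [hvdef]
                    rw [dif_neg hjc]
                  rw [hvj, mul_zero]
                have hvι : ∀ l : Fin (c : ℕ), v (ι l) = x l := by
                  intro l
                  have hlc : ((ι l : Fin n) : ℕ) < (c : ℕ) := l.2
                  show (if h : ((ι l : Fin n) : ℕ) < (c : ℕ) then x ⟨((ι l : Fin n) : ℕ), h⟩
                      else 0) = x l
                  exact (dif_pos hlc).trans (congrArg x (Fin.ext rfl))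
                show (A *ᵥ v) xx = 0
                rw [show (A *ᵥ v) xx = ∑ j, A xx j * v j from by
                  simp [Matrix.mulVec, dotProduct]]
                rw [himg, Finset.sum_congr rfl fun l _ => by rw [hvι l]]
                exact hcon xx
              have hv0 : v = 0 := hAinj t v (by rw [hAdef] at hv; exact hv)
              apply hx
              funext l
              have h3 : v (ι l) = x l := by
                have hlc : ((ι l : Fin n) : ℕ) < (c : ℕ) := l.2
                show (if h : ((ι l : Fin n) : ℕ) < (c : ℕ) then x ⟨((ι l : Fin n) : ℕ), h⟩
                    else 0) = x l
                exact (dif_pos hlc).trans (congrArg x (Fin.ext rfl))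
              rw [show x l = v (ι l) from h3.symm, hv0]
              rfl
            obtain ⟨xx0, hxx0⟩ := hne
            refine Finset.sum_pos' (fun xx _ => mul_self_nonneg _)
              ⟨xx0, Finset.mem_univ _, mul_self_pos.mpr hxx0⟩
        exact hpd.det_pos
      -- expansion of columns of A in terms of columns of Q
      have hF2 : ∀ (x l : Fin n), A x l = ∑ j, B j l * Q t x j := by
        intro x l
        have h := congrFun (congrFun hAQB x) l
        rw [h, Matrix.mul_apply]
        exact Finset.sum_congr rfl fun j _ => mul_comm _ _
      -- coefficients of g in the q-basis
      set β : Fin n → ℝ := fun j => D * B j c - ∑ l, yv l * B j (ι l) with hβdef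
      have hβg : ∀ x, g x = ∑ j, β j * Q t x j := by
        intro x
        have hg1 : g x = D * A x c - ∑ l, yv l * A x (ι l) := by rw [hgdef]
        rw [hg1]
        simp only [hF2]
        calc D * (∑ j, B j c * Q t x j) - ∑ l, yv l * ∑ j, B j (ι l) * Q t x j
            = (∑ j, D * B j c * Q t x j) - ∑ j, ∑ l, yv l * B j (ι l) * Q t x j := by
              rw [Finset.mul_sum]
              congr 1
              · exact Finset.sum_congr rfl fun j _ => by ring
              · rw [Finset.sum_comm]
                refine Finset.sum_congr rfl fun l _ => ?_
                rw [Finset.mul_sum]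
                exact Finset.sum_congr rfl fun j _ => by ring
          _ = ∑ j, β j * Q t x j := by
              rw [← Finset.sum_sub_distrib]
              refine Finset.sum_congr rfl fun j _ => ?_
              simp only [hβdef]
              rw [sub_mul, Finset.sum_mul]
      have hγ : ∀ j, (∑ x, Q t x j * g x) = β j := by
        intro j
        calc (∑ x, Q t x j * g x)
            = ∑ x, ∑ j', β j' * (Q t x j * Q t x j') := by
              refine Finset.sum_congr rfl fun x _ => ?_
              rw [hβg x, Finset.mul_sum]
              exact Finset.sum_congr rfl fun j' _ => by ring
          _ = ∑ j', β j' * ∑ x, Q t x j * Q t x j' := by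
              rw [Finset.sum_comm]
              exact Finset.sum_congr rfl fun j' _ => by rw [Finset.mul_sum]
          _ = β j := by
              simp [hQcol t j, mul_ite]
      -- Gram relation: g is orthogonal to the first c columns of A
      have hG0 : ∀ i : Fin (c : ℕ), (∑ x, A x (ι i) * g x) = 0 := by
        intro i
        have hMy : (∑ l, M i l * yv l) = D * bv i := by
          have h1 : M *ᵥ yv = D • bv := by
            rw [hyvdef, Matrix.mulVec_mulVec, Matrix.mul_adjugate, ← hDdef,
              Matrix.smul_mulVec, Matrix.one_mulVec]
          have h2 := congrFun h1 i
          simpa [Matrix.mulVec, dotProduct] using h2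
        have hexpand : (∑ x, A x (ι i) * g x)
            = D * (∑ x, A x (ι i) * A x c) - ∑ l, yv l * (∑ x, A x (ι i) * A x (ι l)) := by
          rw [Finset.mul_sum]
          rw [show (∑ l, yv l * (∑ x, A x (ι i) * A x (ι l)))
              = ∑ x, ∑ l, yv l * (A x (ι i) * A x (ι l)) from by
            rw [Finset.sum_comm]
            exact Finset.sum_congr rfl fun l _ => by rw [Finset.mul_sum]]
          rw [← Finset.sum_sub_distrib]
          refine Finset.sum_congr rfl fun x _ => ?_
          have hg1 : g x = D * A x c - ∑ l, yv l * A x (ι l) := by rw [hgdef]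
          rw [hg1, mul_sub, Finset.mul_sum]
          congr 1
          · ring
          · exact Finset.sum_congr rfl fun l _ => by ring
        rw [hexpand]
        have hMil : ∀ l, M i l = ∑ x, A x (ι i) * A x (ι l) := fun l => by rw [hMdef]; rfl
        have hbvi : bv i = ∑ x, A x (ι i) * A x c := by rw [hbvdef]
        rw [← hbvi, show (∑ l, yv l * (∑ x, A x (ι i) * A x (ι l))) = ∑ l, M i l * yv l from
          Finset.sum_congr rfl fun l _ => by rw [← hMil l]; ring, hMy]
        ring
      -- triangular solve: the coefficients below c vanish
      have hβι : ∀ v : ℕ, ∀ i : Fin (c : ℕ), (i : ℕ) = v → β (ι i) = 0 := by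
        intro v
        induction v using Nat.strong_induction_on with
        | _ v IH =>
          intro i hi
          have heq : (∑ j, B j (ι i) * β j) = 0 := by
            have h4 : (∑ x, A x (ι i) * g x) = ∑ j, B j (ι i) * β j := by
              calc (∑ x, A x (ι i) * g x)
                  = ∑ x, ∑ j, B j (ι i) * (Q t x j * g x) := by
                    refine Finset.sum_congr rfl fun x _ => ?_
                    rw [hF2 x (ι i), Finset.sum_mul]
                    exact Finset.sum_congr rfl fun j _ => by ring
                _ = ∑ j, B j (ι i) * ∑ x, Q t x j * g x := by
                    rw [Finset.sum_comm]
                    exact Finset.sum_congr rfl fun j _ => by rw [Finset.mul_sum]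
                _ = ∑ j, B j (ι i) * β j :=
                    Finset.sum_congr rfl fun j _ => by rw [hγ j]
            rw [← h4, hG0 i]
          have hsingle : (∑ j, B j (ι i) * β j) = B (ι i) (ι i) * β (ι i) := by
            apply Finset.sum_eq_single
            · intro j _ hj
              rcases lt_trichotomy j (ι i) with hlt | heq' | hgt
              · have hjc : (j : ℕ) < (c : ℕ) := by
                  have h5 : j < c := lt_trans hlt (hιlt i)
                  exact h5
                have hjv : (j : ℕ) < v := by
                  rw [← hi]
                  exact hlt
                have h6 := IH (j : ℕ) hjv ⟨(j : ℕ), hjc⟩ rfl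
                have h7 : ι ⟨(j : ℕ), hjc⟩ = j := Fin.ext (by simp [hιdef])
                rw [h7] at h6
                rw [h6, mul_zero]
              · exact absurd heq' hj
              · rw [hBtri j (ι i) hgt, zero_mul]
            · intro h
              exact absurd (Finset.mem_univ _) h
          rw [hsingle] at heq
          exact (mul_eq_zero.mp heq).resolve_left (ne_of_gt (hBpos (ι i)))
      -- identify the coefficients
      have hβeq : ∀ j, β j = if j = c then D * B c c else 0 := by
        intro j
        rcases lt_trichotomy j c with hlt | heqq | hgt
        · rw [if_neg (ne_of_lt hlt)]
          have hjc : (j : ℕ) < (c : ℕ) := hlt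
          have h6 := hβι (j : ℕ) ⟨(j : ℕ), hjc⟩ rfl
          have h7 : ι ⟨(j : ℕ), hjc⟩ = j := Fin.ext (by simp [hιdef])
          rwa [h7] at h6
        · rw [if_pos heqq, heqq]
          simp only [hβdef]
          rw [show (∑ l, yv l * B c (ι l)) = 0 from
            Finset.sum_eq_zero fun l _ => by rw [hBtri c (ι l) (hιlt l), mul_zero]]
          ring
        · rw [if_neg (ne_of_gt hgt)]
          simp only [hβdef]
          rw [hBtri j c hgt]
          rw [show (∑ l, yv l * B j (ι l)) = 0 from
            Finset.sum_eq_zero fun l _ => by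
              rw [hBtri j (ι l) (lt_trans (hιlt l) hgt), mul_zero]]
          ring
      have hgq : ∀ x, g x = (D * B c c) * Q t x c := by
        intro x
        rw [hβg x, Finset.sum_congr rfl fun j _ => by rw [hβeq j]]
        simp [ite_mul, Finset.sum_ite_eq' Finset.univ c]
      exact ⟨D * B c c, mul_pos hDpos (hBpos c), fun x => by rw [hge x, hgq x]⟩
    refine ⟨gP, ?_, ?_⟩
    · obtain ⟨s, hs, hg⟩ := hmain 0
      have hqq : (∑ y, Q 0 y c * Q 0 y c) = 1 := by simpa using hQcol 0 c c
      have hy : ∃ y, Q 0 y c ≠ 0 := by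
        by_contra h
        push_neg at h
        simp only [h] at hqq
        simp at hqq
      obtain ⟨y, hy⟩ := hy
      refine ⟨y, fun h0 => hy ?_⟩
      have := hg y
      rw [h0] at this
      simp only [Polynomial.eval_zero] at this
      exact (mul_eq_zero.mp this.symm).resolve_left (ne_of_gt hs)
    · intro t x
      obtain ⟨s, hs, hg⟩ := hmain t
      have hqq : (∑ y, Q t y c * Q t y c) = 1 := by simpa using hQcol t c c
      have hsum : (∑ y, (Polynomial.eval t (gP y)) ^ 2) = s ^ 2 := by
        have : ∀ y, (Polynomial.eval t (gP y)) ^ 2 = s ^ 2 * (Q t y c * Q t y c) := by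
          intro y; rw [hg y]; ring
        rw [Finset.sum_congr rfl fun y _ => this y, ← Finset.mul_sum, hqq, mul_one]
      rw [hsum, Real.sqrt_sq hs.le, hg x, mul_div_cancel_left₀ _ (ne_of_gt hs)]
  -- assemble the limit matrix
  have key2 : ∀ x c : Fin n, ∃ l : ℝ, Tendsto (fun t => Q t x c) atTop (𝓝 l) := by
    intro x c
    obtain ⟨p, hp, hrep⟩ := key c
    obtain ⟨l, hl⟩ := aux_poly_tendsto p hp x
    exact ⟨l, hl.congr fun t => (hrep t x).symm⟩
  choose L hL using key2
  refine ⟨Matrix.of L, ?_, fun i j => hL i j⟩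
  ext i j
  have h1 : Tendsto (fun t : ℝ => ∑ x, Q t i x * Q t j x) atTop
      (𝓝 (∑ x, L i x * L j x)) :=
    tendsto_finset_sum _ fun x _ => (hL i x).mul (hL j x)
  have h2 : ∀ t : ℝ, (∑ x, Q t i x * Q t j x) = (1 : Matrix (Fin n) (Fin n) ℝ) i j := by
    intro t
    have := congrFun (congrFun (hQ t).1 i) j
    simpa [Matrix.mul_apply, Matrix.transpose_apply] using this
  have h3 : Tendsto (fun _ : ℝ => (1 : Matrix (Fin n) (Fin n) ℝ) i j) atTop
      (𝓝 (∑ x, L i x * L j x)) := h1.congr h2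
  have h4 := tendsto_nhds_unique h3 tendsto_const_nhds
  rw [Matrix.mul_apply]
  simp only [Matrix.transpose_apply, Matrix.of_apply]
  exact h4
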